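/- For all α > 0 and ρ > 0, ∫₀^∞ (e^{ρ e^{−t/α}} − 1) dt = α ∑_{n=1}^∞ ρⁿ/(n·n!). (The busy period variance integral for exponential service times, underlying formula (1.4).) -/

import Mathlib

open MeasureTheory Real Set Filter Topology

lemma integral_exp_neg_mul_Ioi_zero {b : ℝ} (hb : 0 < b) :
    ∫ x in Ioi (0:ℝ), exp (-b * x) = 1 / b := by
  have h := integral_Ioi_of_hasDerivAt_of_tendsto
    (f := fun x => -exp (-b * x) / b) (f' := fun x => exp (-b * x)) (a := 0) (m := 0)
    (Continuous.continuousWithinAt (by continuity))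
    (fun x _ => by
      simpa [hb.ne'] using (((hasDerivAt_id x).const_mul (-b)).exp.neg.div_const b))
    (exp_neg_integrableOn_Ioi 0 hb)
    ?_
  · rw [h]; norm_num; ring
  · have : Tendsto (fun x => -exp (-b * x) / b) atTop (𝓝 (-0 / b)) := by
      refine Tendsto.div_const (Tendsto.neg ?_) _
      exact tendsto_exp_atBot.comp (tendsto_id.const_mul_atTop_of_neg (neg_neg_iff_pos.2 hb))
    simpa using this

lemma exp_sub_one_eq_tsum (x : ℝ) :
    exp x - 1 = ∑' n : ℕ, x ^ (n + 1) / (Nat.factorial (n + 1)) := by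
  have hsum : Summable fun n : ℕ => x ^ n / (Nat.factorial n) :=
    Real.summable_pow_div_factorial x
  have h : rexp x = ∑' n : ℕ, x ^ n / (Nat.factorial n) := by
    rw [Real.exp_eq_exp_ℝ, NormedSpace.exp_eq_tsum_div]
  rw [h, Summable.tsum_eq_zero_add hsum]
  simp

/-- The busy period variance integral for exponential service times:
for `α > 0` and `ρ > 0`, `∫₀^∞ (e^{ρ e^{-t/α}} - 1) dt = α ∑_{n=1}^∞ ρⁿ/(n·n!)`. -/
theorem mm_infty_busy_period_integral
    (α ρ : ℝ) (hα : 0 < α) (hρ : 0 < ρ) :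
    ∫ t in Ioi (0:ℝ), (exp (ρ * exp (-t / α)) - 1)
      = α * ∑' n : ℕ, ρ ^ (n + 1) / (((n : ℝ) + 1) * (Nat.factorial (n + 1))) := by
  set f : ℕ → ℝ → ℝ := fun n t =>
    ρ ^ (n + 1) * exp (-(((n : ℝ) + 1) / α) * t) / (Nat.factorial (n + 1)) with hf
  have hbpos : ∀ n : ℕ, (0:ℝ) < ((n : ℝ) + 1) / α := fun n => by positivity
  have hptwise : ∀ t : ℝ, exp (ρ * exp (-t / α)) - 1 = ∑' n, f n t := by
    intro t
    rw [exp_sub_one_eq_tsum]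
    congr 1
    ext n
    rw [hf]
    simp only [mul_pow, mul_div_assoc]
    congr 2
    rw [← Real.exp_nat_mul]
    congr 1
    push_cast
    field_simp
  have hint : ∀ n : ℕ, IntegrableOn (f n) (Ioi (0:ℝ)) := by
    intro n
    exact ((exp_neg_integrableOn_Ioi 0 (hbpos n)).const_mul _).div_const _
  have hval : ∀ n : ℕ, ∫ t in Ioi (0:ℝ), f n t
      = α * (ρ ^ (n + 1) / (((n : ℝ) + 1) * (Nat.factorial (n + 1)))) := by
    intro n
    rw [hf]
    simp only
    rw [integral_div, integral_const_mul, integral_exp_neg_mul_Ioi_zero (hbpos n)]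
    have h1 : ((n : ℝ) + 1) ≠ 0 := by positivity
    have h2 : ((Nat.factorial (n+1)) : ℝ) ≠ 0 := by positivity
    field_simp
  have hnonneg : ∀ n : ℕ, ∀ t : ℝ, 0 ≤ f n t := fun n t => by
    rw [hf]; positivity
  have hsummable : Summable fun n : ℕ =>
      ∫ t in Ioi (0:ℝ), ‖f n t‖ := by
    have heq : (fun n : ℕ => ∫ t in Ioi (0:ℝ), ‖f n t‖)
        = fun n : ℕ => α * (ρ ^ (n + 1) / (((n : ℝ) + 1) * (Nat.factorial (n + 1)))) := by
      ext n
      rw [← hval n]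
      congr 1
      ext t
      exact Real.norm_of_nonneg (hnonneg n t)
    rw [heq]
    apply Summable.mul_left
    have hb : Summable fun n : ℕ => ρ ^ (n + 1) / (Nat.factorial (n + 1)) := by
      exact (summable_nat_add_iff 1).mpr (Real.summable_pow_div_factorial ρ)
    refine hb.of_nonneg_of_le (fun n => by positivity) (fun n => ?_)
    apply div_le_div_of_nonneg_left (by positivity) (by positivity)
    nlinarith [(Nat.one_le_cast (α := ℝ)).mpr (Nat.factorial_pos (n+1)), (Nat.cast_pos (α := ℝ)).mpr (Nat.factorial_pos (n+1))]
  calc ∫ t in Ioi (0:ℝ), (exp (ρ * exp (-t / α)) - 1)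
      = ∫ t in Ioi (0:ℝ), ∑' n, f n t := by
        exact integral_congr_ae (Filter.Eventually.of_forall fun t => hptwise t)
    _ = ∑' n, ∫ t in Ioi (0:ℝ), f n t :=
        (integral_tsum_of_summable_integral_norm hint hsummable).symm
    _ = ∑' n : ℕ, α * (ρ ^ (n + 1) / (((n : ℝ) + 1) * (Nat.factorial (n + 1)))) :=
        tsum_congr hval
    _ = α * ∑' n : ℕ, ρ ^ (n + 1) / (((n : ℝ) + 1) * (Nat.factorial (n + 1))) :=
        tsum_mul_left
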